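/- Let Q ⊂ ℝ^d be a compact convex set with nonempty interior and let φ : ℝ^d → ℝ be twice continuously differentiable. Let L = sup { |φ(q₁) − φ(q₂)| / ‖q₁ − q₂‖ : q₁, q₂ ∈ Q, q₁ ≠ q₂ } be the Lipschitz constant of φ on Q, assumed finite and positive. Then there exists a point q* ∈ Q such that ‖∇φ(q*)‖ = L. (Lemma 1 of the paper.) -/

import Mathlib

/-- **Lemma 1.** If `Q ⊂ ℝ^d` is compact and convex with nonempty interior,
`φ : ℝ^d → ℝ` is twice continuously differentiable, and `L > 0` is the Lipschitz
constant of `φ` on `Q` (the supremum of the difference quotients over distinct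
pairs in `Q`), then there is a point `q* ∈ Q` with `‖∇φ(q*)‖ = L`. -/
theorem exists_gradient_norm_eq_lipschitz_const
    {d : ℕ} (Q : Set (EuclideanSpace ℝ (Fin d)))
    (hQcompact : IsCompact Q) (hQconvex : Convex ℝ Q)
    (hQint : (interior Q).Nonempty)
    (φ : EuclideanSpace ℝ (Fin d) → ℝ) (hφ : ContDiff ℝ 2 φ)
    (L : ℝ) (hLpos : 0 < L)
    (hL : IsLUB {r : ℝ | ∃ q₁ ∈ Q, ∃ q₂ ∈ Q, q₁ ≠ q₂ ∧
      r = |φ q₁ - φ q₂| / ‖q₁ - q₂‖} L) :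
    ∃ qstar ∈ Q, ‖gradient φ qstar‖ = L := by

  have hφ1 : ContDiff ℝ 1 φ := hφ.of_le (by norm_num)
  have hdiff : Differentiable ℝ φ := hφ1.differentiable one_ne_zero
  have hfd : ∀ x, HasFDerivAt φ ((InnerProductSpace.toDual ℝ (EuclideanSpace ℝ (Fin d))) (gradient φ x)) x :=
    fun x => ((hdiff x).hasGradientAt).hasFDerivAt
  have hnorm_eq : ∀ x, ‖fderiv ℝ φ x‖ = ‖gradient φ x‖ := by
    intro x
    rw [(hfd x).fderiv]
    exact (InnerProductSpace.toDual ℝ (EuclideanSpace ℝ (Fin d))).norm_map _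
  have hgradcont : Continuous (gradient φ) := by
    have h1 : Continuous (fderiv ℝ φ) := hφ1.continuous_fderiv one_ne_zero
    have : gradient φ = fun x => (InnerProductSpace.toDual ℝ (EuclideanSpace ℝ (Fin d))).symm (fderiv ℝ φ x) := by
      funext x
      rw [(hfd x).fderiv]
      exact ((InnerProductSpace.toDual ℝ (EuclideanSpace ℝ (Fin d))).symm_apply_apply _).symm
    rw [this]
    exact (InnerProductSpace.toDual ℝ (EuclideanSpace ℝ (Fin d))).symm.continuous.comp h1
  -- Part A: gradient norm ≤ L on interior points
  have hAint : ∀ q ∈ interior Q, ‖gradient φ q‖ ≤ L := by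
    intro q hq
    by_cases hg : gradient φ q = 0
    · simp [hg]; exact hLpos.le
    set g := gradient φ q with hgdef
    set v : EuclideanSpace ℝ (Fin d) := ‖g‖⁻¹ • g with hvdef
    have hgnorm : (0:ℝ) < ‖g‖ := norm_pos_iff.mpr hg
    have hvnorm : ‖v‖ = 1 := by
      rw [hvdef, norm_smul, norm_inv, norm_norm, inv_mul_cancel₀ hgnorm.ne']
    obtain ⟨ε, hε, hball⟩ : ∃ ε > 0, Metric.ball q ε ⊆ Q := by
      obtain ⟨ε, hε, hball⟩ := Metric.isOpen_iff.mp isOpen_interior q hq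
      exact ⟨ε, hε, hball.trans interior_subset⟩
    -- derivative of φ along the line t ↦ q + t • v at 0 equals ‖g‖
    have hline : HasDerivAt (fun t : ℝ => q + t • v) v 0 := by
      simpa using ((hasDerivAt_id (0:ℝ)).smul_const v).const_add q
    have h0 : q + (0:ℝ) • v = q := by simp
    have hcomp : HasDerivAt (fun t : ℝ => φ (q + t • v)) ‖g‖ 0 := by
      have hc := (hfd (q + (0:ℝ) • v)).comp_hasDerivAt 0 hline
      rw [h0] at hc
      have : (InnerProductSpace.toDual ℝ (EuclideanSpace ℝ (Fin d))) g v = ‖g‖ := by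
        rw [InnerProductSpace.toDual_apply_apply, hvdef, real_inner_smul_right,
          real_inner_self_eq_norm_sq]
        field_simp
      rwa [this] at hc
    rw [hasDerivAt_iff_tendsto_slope] at hcomp
    have htend : Filter.Tendsto (fun t => |slope (fun t : ℝ => φ (q + t • v)) 0 t|)
        (nhdsWithin 0 (Set.Ioi 0)) (nhds |‖g‖|) := by
      exact (continuous_abs.tendsto _).comp
        (hcomp.mono_left (nhdsWithin_mono 0 (fun t ht => ne_of_gt ht)))
    have habs : |‖g‖| = ‖g‖ := abs_of_nonneg (norm_nonneg _)
    rw [habs] at htend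
    refine le_of_tendsto htend ?_
    filter_upwards [Ioo_mem_nhdsGT_of_mem (Set.left_mem_Ico.mpr hε)] with t ht
    obtain ⟨ht0, htε⟩ := ht
    have hmem : q + t • v ∈ Q := by
      apply hball
      rw [Metric.mem_ball, dist_eq_norm]
      simp [norm_smul, hvnorm, abs_of_pos ht0, htε]
    have hne : q + t • v ≠ q := by
      intro h
      have : t • v = 0 := by
        have := sub_eq_zero.mpr h
        simpa [add_sub_cancel_left] using this
      rw [smul_eq_zero] at this
      rcases this with h | h
      · exact ht0.ne' h
      · rw [h] at hvnorm; simp at hvnorm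
    have hratio : |φ (q + t • v) - φ q| / ‖(q + t • v) - q‖ ≤ L :=
      hL.1 ⟨q + t • v, hmem, q, (hball (by simpa [Metric.mem_ball] using hε)), hne, rfl⟩
    have hnormt : ‖(q + t • v) - q‖ = t := by
      simp [norm_smul, hvnorm, abs_of_pos ht0]
    rw [hnormt] at hratio
    have : |slope (fun t : ℝ => φ (q + t • v)) 0 t| =
        |φ (q + t • v) - φ q| / t := by
      rw [slope_def_field, h0, sub_zero, div_eq_mul_inv, abs_mul, abs_inv,
        abs_of_pos ht0, div_eq_mul_inv]
    rw [this]
    exact hratio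
  -- extend to all of Q via closure of interior
  have hQsub : Q ⊆ closure (interior Q) := by
    obtain ⟨y, hy⟩ := hQint
    intro x hx
    have htend : Filter.Tendsto (fun t : ℝ => x + t • (y - x))
        (nhdsWithin 0 (Set.Ioi 0)) (nhds x) := by
      have : Filter.Tendsto (fun t : ℝ => x + t • (y - x)) (nhds 0) (nhds x) := by
        have hc : Continuous (fun t : ℝ => x + t • (y - x)) :=
          continuous_const.add ((continuous_id (X := ℝ)).smul continuous_const)
        simpa using hc.tendsto (0:ℝ)
      exact this.mono_left nhdsWithin_le_nhds
    refine mem_closure_of_tendsto htend ?_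
    filter_upwards [Ioc_mem_nhdsGT_of_mem (Set.left_mem_Ico.mpr one_pos)] with t ht
    exact hQconvex.add_smul_sub_mem_interior hx hy ht
  have hA : ∀ q ∈ Q, ‖gradient φ q‖ ≤ L := by
    intro q hq
    have hclosed : IsClosed {x : EuclideanSpace ℝ (Fin d) | ‖gradient φ x‖ ≤ L} :=
      isClosed_le hgradcont.norm continuous_const
    exact closure_minimal hAint hclosed (hQsub hq)
  -- Part B: maximizer and MVT
  have hQne : Q.Nonempty := hQint.mono interior_subset
  obtain ⟨qs, hqsQ, hmax⟩ :=
    hQcompact.exists_isMaxOn hQne (hgradcont.norm.continuousOn)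
  refine ⟨qs, hqsQ, le_antisymm (hA qs hqsQ) ?_⟩
  -- L ≤ ‖gradient φ qs‖ since the latter is an upper bound of the ratio set
  refine hL.2 ?_
  rintro r ⟨q₁, h₁, q₂, h₂, hne, rfl⟩
  have hmvt : ‖φ q₁ - φ q₂‖ ≤ ‖gradient φ qs‖ * ‖q₁ - q₂‖ := by
    refine hQconvex.norm_image_sub_le_of_norm_fderiv_le
      (fun x _ => hdiff x) (fun x hx => ?_) h₂ h₁
    rw [hnorm_eq]
    exact hmax hx
  rw [Real.norm_eq_abs] at hmvt
  have hpos : (0:ℝ) < ‖q₁ - q₂‖ := norm_pos_iff.mpr (sub_ne_zero.mpr hne)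
  rw [div_le_iff₀ hpos]
  exact hmvt
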